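/- With λ₁(n) the real root of f_n near 0 for large n, we have log|λ₁(n)| = -log n - 1/n - 3/(2n²) + O(1/n³) as n → ∞. -/

import Mathlib

/-- `f n x = x³ - (n-1)x² - (n+2)x - 1`. -/
noncomputable def f (n : ℕ) (x : ℝ) : ℝ :=
  x ^ 3 - ((n : ℝ) - 1) * x ^ 2 - ((n : ℝ) + 2) * x - 1

lemma f_cmp (n : ℕ) (x y : ℝ) (hx1 : -(1/2 : ℝ) ≤ x) (hx2 : x ≤ 0)
    (hy1 : -(1/2 : ℝ) ≤ y) (hy2 : y ≤ 0)
    (h : f n y < f n x) : x < y := by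
  by_contra hcon
  push_neg at hcon
  have hn : (0:ℝ) ≤ (n:ℝ) := Nat.cast_nonneg n
  have key : f n x ≤ f n y := by
    unfold f
    nlinarith [mul_nonneg (sub_nonneg.2 hcon) hn, sq_nonneg (x+y), sq_nonneg (x-y),
      mul_nonneg (mul_nonneg (sub_nonneg.2 hcon) hn) (neg_nonneg.2 hx2),
      mul_nonneg (mul_nonneg (sub_nonneg.2 hcon) hn) (neg_nonneg.2 hy2),
      mul_nonneg (sub_nonneg.2 hcon) (neg_nonneg.2 hx2),
      mul_nonneg (sub_nonneg.2 hcon) (neg_nonneg.2 hy2)]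
  linarith

set_option maxHeartbeats 1000000 in
theorem stmt_13 (lam1 : ℕ → ℝ) (N : ℕ)
    (hroot : ∀ n : ℕ, N ≤ n → f n (lam1 n) = 0)
    (hloc : ∀ n : ℕ, N ≤ n → lam1 n ∈ Set.Ioo (-1 / 2 : ℝ) 0) :
    ∃ C : ℝ, ∃ n₀ : ℕ, ∀ n : ℕ, n₀ ≤ n →
      |Real.log |lam1 n| + Real.log n + 1 / (n : ℝ) + 3 / (2 * (n : ℝ) ^ 2)|
        ≤ C / (n : ℝ) ^ 3 := by
  refine ⟨100, max N 100, fun n hn => ?_⟩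
  have hN : N ≤ n := le_trans (le_max_left _ _) hn
  have h100 : (100:ℕ) ≤ n := le_trans (le_max_right _ _) hn
  have hn0 : (0:ℝ) < (n:ℝ) := by positivity
  set t : ℝ := 1 / (n:ℝ) with ht_def
  have ht0 : 0 < t := by positivity
  have ht : t ≤ 1/100 := by
    rw [ht_def, div_le_div_iff₀ hn0 (by norm_num)]
    have : (100:ℝ) ≤ (n:ℝ) := by exact_mod_cast h100
    linarith
  have ht1 : t ≤ 1 := by linarith
  have hnt : (n:ℝ) = 1/t := by rw [ht_def, one_div_one_div]
  have htne : t ≠ 0 := ne_of_gt ht0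
  clear_value t
  -- power facts
  have hP4 : 0 < t^4 := pow_pos ht0 4
  have hP6 : 0 ≤ t^6 := pow_nonneg ht0.le 6
  have hP9 : 0 ≤ t^9 := pow_nonneg ht0.le 9
  have hP11 : 0 ≤ t^11 := pow_nonneg ht0.le 11
  have hP12 : 0 ≤ t^12 := pow_nonneg ht0.le 12
  have hq2c : t^2 ≤ 1/10000 := le_trans (pow_le_pow_left₀ ht0.le ht 2) (by norm_num)
  have hcube : t^3 ≤ 1/1000000 := le_trans (pow_le_pow_left₀ ht0.le ht 3) (by norm_num)
  have h7 : t^7 ≤ t^4 * (1/1000000) := by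
    calc t^7 = t^4 * t^3 := by ring
    _ ≤ t^4 * (1/1000000) := by
        exact mul_le_mul_of_nonneg_left hcube (pow_nonneg ht0.le 4)
  have hle : ∀ k l : ℕ, k ≤ l → t^l ≤ t^k := fun k l hkl =>
    pow_le_pow_of_le_one ht0.le ht1 hkl
  -- root data
  have hfr := hroot n hN
  have hL1 : -(1/2 : ℝ) ≤ lam1 n := by have := (hloc n hN).1; linarith
  have hL2 := (hloc n hN).2
  -- bracketing points
  set a : ℝ := -t + t^2 + t^3 - 10*t^4 with ha_def
  set b : ℝ := -t + t^2 + t^3 + 10*t^4 with hb_def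
  clear_value a b
  have hfa : 0 < f n a := by
    have hexp : t * f n a = 6*t^4 + 41*t^6 - 34*t^7 - 60*t^8 + 133*t^9
        - 359*t^10 + 270*t^11 + 300*t^12 - 1000*t^13 := by
      unfold f
      rw [hnt, ha_def]
      field_simp
      ring
    have hpos : 0 < t * f n a := by
      rw [hexp]
      have h87 := hle 7 8 (by norm_num)
      have h107 := hle 7 10 (by norm_num)
      have h137 := hle 7 13 (by norm_num)
      linarith
    by_contra hc
    push_neg at hc
    nlinarith [mul_nonpos_of_nonneg_of_nonpos ht0.le hc]
  have hfb : f n b < 0 := by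
    have hexp : t * f n b = -14*t^4 - 39*t^6 + 26*t^7 - 140*t^8 + 73*t^9
        - 239*t^10 + 330*t^11 + 300*t^12 + 1000*t^13 := by
      unfold f
      rw [hnt, hb_def]
      field_simp
      ring
    have hneg : t * f n b < 0 := by
      rw [hexp]
      have h97 := hle 7 9 (by norm_num)
      have h117 := hle 7 11 (by norm_num)
      have h127 := hle 7 12 (by norm_num)
      have h137 := hle 7 13 (by norm_num)
      have h27 : 0 ≤ t^7 := pow_nonneg ht0.le 7
      have h8 : 0 ≤ t^8 := pow_nonneg ht0.le 8
      have h10 : 0 ≤ t^10 := pow_nonneg ht0.le 10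
      linarith
    by_contra hc
    push_neg at hc
    nlinarith [mul_nonneg ht0.le hc]
  -- interval membership
  have hsq : t^2 ≤ t*(1/100) := by
    calc t^2 = t*t := by ring
    _ ≤ t*(1/100) := mul_le_mul_of_nonneg_left ht ht0.le
  have hc3 : t^3 ≤ t*(1/10000) := by
    calc t^3 = t*t^2 := by ring
    _ ≤ t*(1/10000) := mul_le_mul_of_nonneg_left hq2c ht0.le
  have hc4 : t^4 ≤ t*(1/1000000) := by
    calc t^4 = t*t^3 := by ring
    _ ≤ t*(1/1000000) := mul_le_mul_of_nonneg_left hcube ht0.le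
  have hP2 : 0 ≤ t^2 := sq_nonneg t
  have hP3 : 0 ≤ t^3 := pow_nonneg ht0.le 3
  have ha1 : -(1/2 : ℝ) ≤ a := by rw [ha_def]; nlinarith
  have ha2 : a ≤ 0 := by rw [ha_def]; nlinarith
  have hb1 : -(1/2 : ℝ) ≤ b := by rw [hb_def]; nlinarith
  have hb2 : b ≤ 0 := by rw [hb_def]; nlinarith
  -- bracketing of the root
  have h_alam : a < lam1 n := f_cmp n a (lam1 n) ha1 ha2 hL1 hL2.le (by rw [hfr]; exact hfa)
  have h_lamb : lam1 n < b := f_cmp n (lam1 n) b hL1 hL2.le hb1 hb2 (by rw [hfr]; exact hfb)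
  -- positive quantities
  set L : ℝ := -(lam1 n) with hLdef
  clear_value L
  have hLpos : 0 < L := by rw [hLdef]; linarith
  set p : ℝ := t - t^2 - t^3 with hp_def
  clear_value p
  have hLlo : p - 10*t^4 < L := by rw [hLdef, hp_def]; rw [hb_def] at h_lamb; linarith
  have hLhi : L < p + 10*t^4 := by rw [hLdef, hp_def]; rw [ha_def] at h_alam; linarith
  have hp_half : t/2 ≤ p := by rw [hp_def]; nlinarith
  have hp_pos : 0 < p := by linarith
  have hL_qtr : t/4 ≤ L := by nlinarith
  -- log (L/p) bounds
  have hr_hi : Real.log (L/p) ≤ 20*t^3 := by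
    have h1 := Real.log_le_sub_one_of_pos (div_pos hLpos hp_pos)
    have h2 : L/p - 1 ≤ 20*t^3 := by
      rw [div_sub_one (ne_of_gt hp_pos), div_le_iff₀ hp_pos]
      nlinarith
    linarith
  have hr_lo : -(40*t^3) ≤ Real.log (L/p) := by
    have h1 := Real.log_le_sub_one_of_pos (div_pos hp_pos hLpos)
    have h2 : p/L - 1 ≤ 40*t^3 := by
      rw [div_sub_one (ne_of_gt hLpos), div_le_iff₀ hLpos]
      nlinarith
    have h3 : Real.log (p/L) = -Real.log (L/p) := by
      rw [← Real.log_inv, inv_div]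
    linarith [h3 ▸ h1]
  -- exp bound
  set u : ℝ := t + (3/2)*t^2 with hu_def
  clear_value u
  have hu0 : 0 ≤ u := by rw [hu_def]; linarith [hP2]
  have hu2t : u ≤ 2*t := by rw [hu_def]; linarith [hsq]
  have hu1 : |u| ≤ 1 := by rw [abs_of_nonneg hu0]; linarith
  have hδ := Real.exp_bound hu1 (by norm_num : 0 < 3)
  have hsum : ∑ m ∈ Finset.range 3, u^m / (Nat.factorial m : ℝ) = 1 + u + u^2/2 := by
    simp [Finset.sum_range_succ, Nat.factorial]
  rw [hsum] at hδ
  have hu3 : |u|^3 ≤ 8*t^3 := by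
    rw [abs_of_nonneg hu0]
    calc u^3 ≤ (2*t)^3 := pow_le_pow_left₀ hu0 hu2t 3
    _ = 8*t^3 := by ring
  have hδ' : |Real.exp u - (1 + u + u^2/2)| ≤ 2*t^3 := by
    norm_num [Nat.factorial] at hδ
    linarith [hu3, hδ]
  obtain ⟨hE_lo, hE_hi⟩ := abs_le.mp hδ'
  -- w and m
  set w : ℝ := 1 - t - t^2 with hw_def
  clear_value w
  have hw_pos : 0 < w := by rw [hw_def]; linarith [hq2c]
  have hw_le1 : w ≤ 1 := by rw [hw_def]; linarith [hP2, ht0.le]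
  set m : ℝ := w * Real.exp u with hm_def
  clear_value m
  have hm_pos : 0 < m := by rw [hm_def]; exact mul_pos hw_pos (Real.exp_pos u)
  have hm_hi : m ≤ 1 + 6*t^3 := by
    have h1 : m ≤ w * (1 + u + u^2/2 + 2*t^3) := by
      rw [hm_def]
      apply mul_le_mul_of_nonneg_left _ hw_pos.le
      linarith
    have h2 : w * (1 + u + u^2/2 + 2*t^3) ≤ 1 + 6*t^3 := by
      rw [hw_def, hu_def]
      linarith [pow_nonneg ht0.le 5, hP4.le, hP6, hP3]
    linarith
  have hm_lo : 1 - 6*t^3 ≤ m := by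
    have h1 : w * (1 + u + u^2/2 - 2*t^3) ≤ m := by
      rw [hm_def]
      apply mul_le_mul_of_nonneg_left _ hw_pos.le
      linarith
    have h2 : 1 - 6*t^3 ≤ w * (1 + u + u^2/2 - 2*t^3) := by
      rw [hw_def, hu_def]
      linarith [hle 3 4 (by norm_num), hle 3 5 (by norm_num), hle 3 6 (by norm_num)]
    linarith
  -- log m bounds
  have hlm_hi : Real.log m ≤ 6*t^3 := by
    have h1 := Real.log_le_sub_one_of_pos hm_pos
    linarith
  have hlm_lo : -(12*t^3) ≤ Real.log m := by
    have hminv : 0 < m⁻¹ := inv_pos.2 hm_pos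
    have h1 := Real.log_le_sub_one_of_pos hminv
    have h2 : Real.log m⁻¹ = -Real.log m := Real.log_inv m
    have h3 : m⁻¹ - 1 ≤ 12*t^3 := by
      rw [inv_eq_one_div, div_sub_one (ne_of_gt hm_pos), div_le_iff₀ hm_pos]
      have k1 : 12*t^3*(1-6*t^3) ≤ 12*t^3*m :=
        mul_le_mul_of_nonneg_left hm_lo (by linarith [hP3])
      have k2 : t^3*t^3 ≤ t^3*(1/1000000) := mul_le_mul_of_nonneg_left hcube hP3
      linarith [hm_hi]
    linarith [h2 ▸ h1]
  -- assembly
  have hLne : L ≠ 0 := ne_of_gt hLpos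
  have hpne : p ≠ 0 := ne_of_gt hp_pos
  have habs : |lam1 n| = L := by rw [hLdef, abs_of_neg hL2]
  have hlogm : Real.log m = Real.log w + u := by
    rw [hm_def, Real.log_mul (ne_of_gt hw_pos) (Real.exp_ne_zero u), Real.log_exp]
  have hlogp : Real.log p = Real.log t + Real.log w := by
    have : p = t * w := by rw [hp_def, hw_def]; ring
    rw [this, Real.log_mul (ne_of_gt ht0) (ne_of_gt hw_pos)]
  have hlogn : Real.log (n:ℝ) = -Real.log t := by
    rw [hnt, one_div, Real.log_inv]
  have hlogLp : Real.log (L/p) = Real.log L - Real.log p := Real.log_div hLne hpne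
  have hident : Real.log |lam1 n| + Real.log n + t + 3 / (2 * (n : ℝ) ^ 2)
      = Real.log (L/p) + Real.log m := by
    rw [habs, hlogLp, hlogp, hlogn, hlogm, hnt, hu_def]
    field_simp
    ring
  rw [hident]
  have hgoal : (100:ℝ) / (n:ℝ)^3 = 100 * t^3 := by
    rw [hnt]
    field_simp
  rw [hgoal]
  rw [abs_le]
  constructor <;> linarith [hP3]
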